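/- Let G be a locally compact Hausdorff topological group with a left Haar measure μ, and let ϱ : G → G be a topological group automorphism (a group automorphism that is also a homeomorphism). Let B ⊆ G be a compact set with nonempty interior, and assume ϱ is contracting in the sense that for every compact set K ⊆ G there is an N such that K ⊆ ϱ⁻ⁿ(B) for all n ≥ N. Let C ⊆ G be a measurable set such that μ(ϱⁿ(B) \ C) / μ(ϱⁿ(B)) → 0 as n → ∞ (that is, the identity is a density point of C with respect to the family of balls ϱⁿ(B)). Then the sets ϱ⁻ⁿ(C) converge in measure to G: for every compact set K ⊆ G, μ(K \ ϱ⁻ⁿ(C)) → 0 as n → ∞. -/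

import Mathlib

open MeasureTheory Filter Topology
open scoped NNReal ENNReal

/-- Proposition 5.1: let `ϱ` be a contracting topological automorphism of a locally
compact Hausdorff group `G` with left Haar measure `μ`, `B` a compact set with
nonempty interior, and `C` a measurable set such that the identity is a density
point of `C` with respect to the balls `ϱⁿ(B)` (i.e. `μ(ϱⁿ(B) \ C)/μ(ϱⁿ(B)) → 0`).
Then the sets `ϱ⁻ⁿ(C)` converge in measure to `G`: for every compact `K`,
`μ(K \ ϱ⁻ⁿ(C)) → 0`. -/
theorem stmt_3 {G : Type*} [Group G] [TopologicalSpace G] [IsTopologicalGroup G]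
    [LocallyCompactSpace G] [T2Space G] [MeasurableSpace G] [BorelSpace G]
    (μ : Measure G) [μ.IsHaarMeasure]
    (ϱ : G ≃* G) (hϱ : Continuous ϱ) (hϱsymm : Continuous ϱ.symm)
    (B : Set G) (hB : IsCompact B) (hBint : (interior B).Nonempty)
    (hcontr : ∀ K : Set G, IsCompact K →
      ∃ N : ℕ, ∀ n ≥ N, K ⊆ (⇑ϱ.symm)^[n] '' B)
    (C : Set G) (hC : MeasurableSet C)
    (hdens : Tendsto
      (fun n : ℕ => μ (((⇑ϱ)^[n] '' B) \ C) / μ ((⇑ϱ)^[n] '' B)) atTop (𝓝 0)) :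
    ∀ K : Set G, IsCompact K →
      Tendsto (fun n : ℕ => μ (K \ ((⇑ϱ.symm)^[n] '' C))) atTop (𝓝 0) := by
  -- basic inverse facts
  have hli : Function.LeftInverse ϱ.symm ϱ := ϱ.left_inv
  have hri : Function.LeftInverse ϱ ϱ.symm := ϱ.right_inv
  have hlin : ∀ n : ℕ, Function.LeftInverse ((⇑ϱ.symm)^[n]) ((⇑ϱ)^[n]) :=
    fun n => hli.iterate n
  have hrin : ∀ n : ℕ, Function.LeftInverse ((⇑ϱ)^[n]) ((⇑ϱ.symm)^[n]) :=
    fun n => hri.iterate n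
  have himg : ∀ (n : ℕ) (s : Set G), (⇑ϱ)^[n] '' s = ((⇑ϱ.symm)^[n]) ⁻¹' s :=
    fun n s => congrFun (Set.image_eq_preimage_of_inverse (hlin n) (hrin n)) s
  have hmeas_symm : ∀ n : ℕ, Measurable ((⇑ϱ.symm)^[n]) :=
    fun n => hϱsymm.measurable.iterate n
  have hmeas_img : ∀ (n : ℕ) (s : Set G), MeasurableSet s →
      MeasurableSet ((⇑ϱ)^[n] '' s) := by
    intro n s hs
    rw [himg]
    exact (hmeas_symm n) hs
  have hmeasD : ∀ (n : ℕ) (s : Set G), MeasurableSet s →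
      MeasurableSet ((⇑ϱ.symm)^[n] '' s) := by
    intro n s hs
    rw [congrFun (Set.image_eq_preimage_of_inverse (hrin n) (hlin n)) s]
    exact (hϱ.measurable.iterate n) hs
  -- the Haar scalar factor of ϱ
  set ν : Measure G := μ.map ϱ.symm with hν
  have hνHaar : ν.IsHaarMeasure := ϱ.symm.isHaarMeasure_map μ hϱsymm hϱ
  set c : ℝ≥0 := Measure.haarScalarFactor ν μ with hc
  have hc0 : c ≠ 0 := (Measure.haarScalarFactor_pos_of_isHaarMeasure ν μ).ne'
  have hcc0 : (c : ℝ≥0∞) ≠ 0 := by exact_mod_cast hc0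
  -- closure of image of a set with compact closure
  have hclos : ∀ (f : G → G), Continuous f → ∀ s : Set G, IsCompact (closure s) →
      IsCompact (closure (f '' s)) := by
    intro f hf s hs
    refine (hs.image hf).of_isClosed_subset isClosed_closure ?_
    exact closure_minimal (Set.image_mono subset_closure) (hs.image hf).isClosed
  -- scaling of the measure under ϱ
  have hmul : ∀ s : Set G, MeasurableSet s → IsCompact (closure s) →
      μ (⇑ϱ '' s) = (c : ℝ≥0∞) * μ s := by
    intro s hs hcs
    have h1 : ν s = c • μ s :=
      Measure.measure_isMulInvariant_eq_smul_of_isCompact_closure ν μ hcs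
    have h2 : ν s = μ (⇑ϱ.symm ⁻¹' s) := Measure.map_apply hϱsymm.measurable hs
    have h3 : ⇑ϱ '' s = ⇑ϱ.symm ⁻¹' s := congrFun (Set.image_eq_preimage_of_inverse hli hri) s
    rw [h3, ← h2, h1]
    rfl
  have hpow : ∀ (n : ℕ) (s : Set G), MeasurableSet s → IsCompact (closure s) →
      μ ((⇑ϱ)^[n] '' s) = (c : ℝ≥0∞) ^ n * μ s := by
    intro n
    induction n with
    | zero => intro s _ _; simp
    | succ n ih =>
      intro s hs hcs
      rw [Function.iterate_succ', Set.image_comp,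
        hmul _ (hmeas_img n s hs) (hclos _ (hϱ.iterate n) s hcs), ih s hs hcs,
        pow_succ]
      ring
  -- measure of the balls
  have hμB0 : μ B ≠ 0 := (Measure.measure_pos_of_nonempty_interior μ hBint).ne'
  have hμBt : μ B ≠ ∞ := hB.measure_lt_top.ne
  have hBcl : IsCompact (closure B) := by rwa [hB.isClosed.closure_eq]
  have hball : ∀ m : ℕ, μ ((⇑ϱ)^[m] '' B) = (c : ℝ≥0∞) ^ m * μ B :=
    fun m => hpow m B hB.measurableSet hBcl
  have hball0 : ∀ m : ℕ, μ ((⇑ϱ)^[m] '' B) ≠ 0 := by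
    intro m; rw [hball m]
    exact mul_ne_zero (pow_ne_zero m hcc0) hμB0
  have hballt : ∀ m : ℕ, μ ((⇑ϱ)^[m] '' B) ≠ ∞ := by
    intro m; rw [hball m]
    exact ENNReal.mul_ne_top (ENNReal.pow_ne_top ENNReal.coe_ne_top) hμBt
  -- main estimate
  intro K hK
  obtain ⟨N, hN⟩ := hcontr K hK
  have hKsub : K ⊆ (⇑ϱ.symm)^[N] '' B := hN N le_rfl
  set r : ℕ → ℝ≥0∞ := fun m => μ (((⇑ϱ)^[m] '' B) \ C) / μ ((⇑ϱ)^[m] '' B) with hr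
  have hbound : ∀ n ≥ N, μ (K \ ((⇑ϱ.symm)^[n] '' C)) ≤
      r (n - N) * (μ B / (c : ℝ≥0∞) ^ N) := by
    intro n hn
    set D : Set G := (⇑ϱ.symm)^[n] '' C with hD
    have hDmeas : MeasurableSet D := hmeasD n C hC
    have hKD_meas : MeasurableSet (K \ D) := hK.isClosed.measurableSet.diff hDmeas
    have hKD_cl : IsCompact (closure (K \ D)) := by
      refine hK.of_isClosed_subset isClosed_closure ?_
      exact closure_minimal Set.diff_subset hK.isClosed
    -- image of K \ D under ϱ^[n]
    have himgKD : (⇑ϱ)^[n] '' (K \ D) = ((⇑ϱ)^[n] '' K) \ C := by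
      rw [Set.image_diff (hlin n).injective, hD, ← Set.image_comp,
        (hrin n).comp_eq_id, Set.image_id]
    -- ϱ^[n] '' K is contained in ϱ^[n-N] '' B
    have hsub : (⇑ϱ)^[n] '' K ⊆ (⇑ϱ)^[n - N] '' B := by
      intro x hx
      obtain ⟨k, hk, rfl⟩ := hx
      obtain ⟨b, hb, hbk⟩ := hKsub hk
      refine ⟨(⇑ϱ)^[N] k, ?_, ?_⟩
      · rw [← hbk, hrin N b]
        exact hb
      · rw [← Function.iterate_add_apply]
        congr 1
        omega
    -- pull everything together
    have h1 : (c : ℝ≥0∞) ^ n * μ (K \ D) ≤ μ (((⇑ϱ)^[n - N] '' B) \ C) := by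
      rw [← hpow n _ hKD_meas hKD_cl, himgKD]
      exact measure_mono (Set.diff_subset_diff_left hsub)
    have h2 : μ (((⇑ϱ)^[n - N] '' B) \ C) = r (n - N) * μ ((⇑ϱ)^[n - N] '' B) :=
      (ENNReal.div_mul_cancel (hball0 _) (hballt _)).symm
    have h3 : μ (K \ D) ≤ (r (n - N) * μ ((⇑ϱ)^[n - N] '' B)) / (c : ℝ≥0∞) ^ n := by
      rw [ENNReal.le_div_iff_mul_le (Or.inl (pow_ne_zero n hcc0))
        (Or.inl (ENNReal.pow_ne_top ENNReal.coe_ne_top))]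
      rw [mul_comm]
      rw [← h2]
      exact h1
    refine h3.trans (le_of_eq ?_)
    have hcn : (c : ℝ≥0∞) ^ n = (c : ℝ≥0∞) ^ (n - N) * (c : ℝ≥0∞) ^ N := by
      rw [← pow_add]; congr 1; omega
    rw [hball, hcn, show r (n - N) * ((c : ℝ≥0∞) ^ (n - N) * μ B)
        = (c : ℝ≥0∞) ^ (n - N) * (r (n - N) * μ B) by ring,
      ENNReal.mul_div_mul_left _ _ (pow_ne_zero _ hcc0)
        (ENNReal.pow_ne_top ENNReal.coe_ne_top),
      mul_div_assoc]
  -- conclude by squeezing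
  have hupper : Tendsto (fun n : ℕ => r (n - N) * (μ B / (c : ℝ≥0∞) ^ N))
      atTop (𝓝 0) := by
    have h0 : Tendsto (fun n : ℕ => r (n - N)) atTop (𝓝 0) :=
      hdens.comp (tendsto_sub_atTop_nat N)
    have := ENNReal.Tendsto.mul_const h0
      (Or.inr (ENNReal.div_lt_top hμBt (pow_ne_zero N hcc0)).ne)
    simpa using this
  refine tendsto_of_tendsto_of_tendsto_of_le_of_le' tendsto_const_nhds hupper
    (Eventually.of_forall fun n => zero_le) ?_
  filter_upwards [eventually_ge_atTop N] with n hn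
  exact hbound n hn
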